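/- If U is a real-connected slice-domain in ℍ, then any two points p, q ∈ U can be joined by a concatenation of two slice preserving paths in U, i.e., there exist paths γ₁, γ₂ in U, each with image lying in a single slice ℂ_I ∩ U for some I ∈ 𝕊, such that γ₁(0) = p, γ₁(1) = γ₂(0), and γ₂(1) = q. -/

import Mathlib

noncomputable section

abbrev Hq := Quaternion ℝ

/-- The sphere of imaginary units of the quaternions. -/
def SphereS : Set Hq := {q | q ^ 2 = -1}

/-- The identification of `ℂ` with the slice plane `ℂ_I = ℝ + ℝI`. -/
def sliceEmb (I : Hq) : ℂ → Hq := fun z => (z.re : Hq) + (z.im : Hq) * I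

/-- The slice complex plane `ℂ_I = ℝ + ℝI`. -/
def sliceC (I : Hq) : Set Hq := Set.range (sliceEmb I)

/-- The slice-topology on the quaternions: the quotient topology induced by the
canonical map from the disjoint union of the slices, i.e. the supremum of the
topologies coinduced by the parametrizations of the slices. -/
def sliceTopology : TopologicalSpace Hq :=
  ⨆ I ∈ SphereS, TopologicalSpace.coinduced (sliceEmb I) inferInstance

/-- The real line inside the quaternions. -/
def realLine : Set Hq := Set.range (fun x : ℝ => (x : Hq))

/-- `g : ℂ → ℍ` (thought of as a function on the slice `ℂ_I`) is (left) holomorphic on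
`U`: real differentiable with `∂ₓ g + I ∂_y g = 0`. -/
def SliceHolomorphicOn (I : Hq) (g : ℂ → Hq) (U : Set ℂ) : Prop :=
  ∀ z ∈ U, ∃ L : ℂ →L[ℝ] Hq, HasFDerivAt g L z ∧ L 1 + I * L Complex.I = 0

/-- A function on a slice-open set is slice regular if it is holomorphic on each slice. -/
def SliceRegular (f : Hq → Hq) (Ω : Set Hq) : Prop :=
  ∀ I ∈ SphereS, SliceHolomorphicOn I (f ∘ sliceEmb I) (sliceEmb I ⁻¹' Ω)

/-- `K(m)` for `K ∈ 𝕊^N` (with `K 0 = 1` by convention) and `1 ≤ m ≤ 2^N`: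
`∏_{i=N}^{1} (K_i K_{i-1})^{m_i}` where `(m_N … m_1)₂` is the binary expansion of `m-1`. -/
def zetaTerm (K : ℕ → Hq) (N m : ℕ) : Hq :=
  ((List.range N).reverse.map
    (fun j => (K (j + 1) * K j) ^ (if Nat.testBit (m - 1) j then 1 else 0))).prod

/-- The matrix `σ_N` (0-indexed): entry `(i,j)` is `(-1)^{N+(j+1)}` if
`(i+1)+(j+1) = 2^N + 1`, and `0` otherwise. -/
def sigmaMat (N : ℕ) : Matrix (Fin (2 ^ N)) (Fin (2 ^ N)) ℝ :=
  Matrix.of fun i j =>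
    if (i : ℕ) + (j : ℕ) = 2 ^ N - 1 then (-1 : ℝ) ^ (N + (j : ℕ) + 1) else 0

def QOrth (I J : Hq) : Prop := (I * star J).re = 0

theorem isOpen_slice_iff {s : Set Hq} :
    @IsOpen Hq sliceTopology s ↔ ∀ I ∈ SphereS, IsOpen (sliceEmb I ⁻¹' s) := by
  unfold sliceTopology
  simp only [isOpen_iSup_iff, isOpen_coinduced]

theorem continuous_sliceEmb (I : Hq) (hI : I ∈ SphereS) :
    @Continuous ℂ Hq _ sliceTopology (sliceEmb I) := by
  rw [@continuous_def _ _ _ sliceTopology]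
  intro s hs
  exact isOpen_slice_iff.mp hs I hI

theorem sliceEmb_smul (I : Hq) (z : ℂ) : sliceEmb I z = (z.re : Hq) + z.im • I := by
  rw [sliceEmb, Quaternion.coe_mul_eq_smul]

theorem sliceEmb_real (I : Hq) (z : ℂ) (h : z.im = 0) : sliceEmb I z = ((z.re : ℝ) : Hq) := by
  simp [sliceEmb, h]

theorem sliceEmb_ofReal (I : Hq) (x : ℝ) : sliceEmb I (x : ℂ) = (x : Hq) := by
  simp [sliceEmb]

theorem sliceEmb_neg (I : Hq) (z : ℂ) :
    sliceEmb (-I) z = sliceEmb I ((starRingEnd ℂ) z) := by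
  simp only [sliceEmb, mul_neg, Complex.conj_re, Complex.conj_im]
  push_cast
  rw [neg_mul]

theorem sphere_re (I : Hq) (h : I ∈ SphereS) : I.re = 0 := by
  have h2 : I * I = -1 := by have h' : I ^ 2 = -1 := h; rwa [sq] at h'
  have hre := congrArg QuaternionAlgebra.re h2
  have hi := congrArg QuaternionAlgebra.imI h2
  have hj := congrArg QuaternionAlgebra.imJ h2
  have hk := congrArg QuaternionAlgebra.imK h2
  simp [Quaternion.re_mul, Quaternion.imI_mul, Quaternion.imJ_mul, Quaternion.imK_mul, Quaternion.re_one, Quaternion.imI_one,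
    Quaternion.imJ_one, Quaternion.imK_one] at hre hi hj hk
  by_contra hr
  have hI : I.imI = 0 := by
    have : I.re * I.imI = 0 := by linarith
    exact (mul_eq_zero.mp this).resolve_left hr
  have hJ : I.imJ = 0 := by
    have : I.re * I.imJ = 0 := by linarith
    exact (mul_eq_zero.mp this).resolve_left hr
  have hK : I.imK = 0 := by
    have : I.re * I.imK = 0 := by linarith
    exact (mul_eq_zero.mp this).resolve_left hr
  rw [hI, hJ, hK] at hre; nlinarith

theorem sphere_ne_zero (I : Hq) (h : I ∈ SphereS) : I ≠ 0 := by
  intro h0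
  have h' : I ^ 2 = -1 := h
  rw [h0] at h'
  simp at h'

theorem sphere_neg (I : Hq) (h : I ∈ SphereS) : -I ∈ SphereS := by
  have h' : I ^ 2 = -1 := h
  show (-I) ^ 2 = -1
  rwa [neg_sq]

theorem sliceEmb_re (I : Hq) (hI : I ∈ SphereS) (z : ℂ) : (sliceEmb I z).re = z.re := by
  rw [sliceEmb_smul]
  simp [sphere_re I hI]

theorem smul_sphere_eq {I J : Hq} (hI : I ∈ SphereS) (hJ : J ∈ SphereS) {b c : ℝ}
    (h : b • I = c • J) (hb : b ≠ 0) : (b = c ∧ I = J) ∨ (b = -c ∧ I = -J) := by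
  have hI2 : I * I = -1 := by have h' : I ^ 2 = -1 := hI; rwa [sq] at h'
  have hJ2 : J * J = -1 := by have h' : J ^ 2 = -1 := hJ; rwa [sq] at h'
  have hsq : (b * b) • (-1 : Hq) = (c * c) • (-1 : Hq) := by
    have h2 : (b • I) * (b • I) = (c • J) * (c • J) := by rw [h]
    rwa [smul_mul_smul, smul_mul_smul, hI2, hJ2] at h2
  have hbc : b * b = c * c := by
    have := congrArg QuaternionAlgebra.re hsq
    simp [Quaternion.re_one] at this
    linarith
  have : (b - c) * (b + c) = 0 := by ring_nf; linarith
  rcases mul_eq_zero.mp this with h1 | h1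
  · left
    have hbc' : b = c := by linarith
    subst hbc'
    exact ⟨rfl, smul_right_injective Hq hb h⟩
  · right
    have hbc' : b = -c := by linarith
    refine ⟨hbc', ?_⟩
    have : b • I = b • (-J) := by
      rw [h, smul_neg, hbc', neg_smul, neg_neg]
    exact smul_right_injective Hq hb this

theorem sliceEmb_eq_parts {I J : Hq} (hI : I ∈ SphereS) (hJ : J ∈ SphereS) {z w : ℂ}
    (h : sliceEmb I z = sliceEmb J w) : z.re = w.re ∧ z.im • I = w.im • J := by
  have hre : z.re = w.re := by
    rw [← sliceEmb_re I hI z, ← sliceEmb_re J hJ w, h]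
  constructor
  · exact hre
  · rw [sliceEmb_smul, sliceEmb_smul, hre] at h
    exact add_left_cancel h

theorem sliceEmb_injective (I : Hq) (hI : I ∈ SphereS) : Function.Injective (sliceEmb I) := by
  intro z w h
  obtain ⟨hre, him⟩ := sliceEmb_eq_parts hI hI h
  have : (z.im - w.im) • I = 0 := by rw [sub_smul, him, sub_self]
  rcases smul_eq_zero.mp this with h1 | h1
  · exact Complex.ext hre (by linarith)
  · exact absurd h1 (sphere_ne_zero I hI)

theorem sliceEmb_eq_cases {I J : Hq} (hI : I ∈ SphereS) (hJ : J ∈ SphereS) {z w : ℂ}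
    (h : sliceEmb I z = sliceEmb J w) (hw : w.im ≠ 0) :
    (I = J ∧ z = w) ∨ (I = -J ∧ z = (starRingEnd ℂ) w) := by
  obtain ⟨hre, him⟩ := sliceEmb_eq_parts hI hJ h
  have hz : z.im ≠ 0 := by
    intro h0
    rw [h0, zero_smul] at him
    rcases smul_eq_zero.mp him.symm with h1 | h1
    · exact hw h1
    · exact sphere_ne_zero J hJ h1
  rcases smul_sphere_eq hI hJ him hz with ⟨hbc, hIJ⟩ | ⟨hbc, hIJ⟩
  · exact Or.inl ⟨hIJ, Complex.ext hre hbc⟩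
  · exact Or.inr ⟨hIJ, Complex.ext (by simpa using hre) (by simpa using hbc)⟩

theorem sliceC_neg (I : Hq) : sliceC (-I) = sliceC I := by
  unfold sliceC
  ext x
  constructor
  · rintro ⟨z, rfl⟩
    exact ⟨(starRingEnd ℂ) z, (sliceEmb_neg I z).symm⟩
  · rintro ⟨z, rfl⟩
    refine ⟨(starRingEnd ℂ) z, ?_⟩
    rw [sliceEmb_neg]
    simp

theorem isOpen_slice_image (I : Hq) (hI : I ∈ SphereS) (A : Set ℂ) (hA : IsOpen A)
    (him : ∀ z ∈ A, z.im ≠ 0) : @IsOpen Hq sliceTopology (sliceEmb I '' A) := by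
  rw [isOpen_slice_iff]
  intro J hJ
  by_cases hJI : J = I
  · subst hJI
    rw [Set.preimage_image_eq A (sliceEmb_injective J hJ)]
    exact hA
  by_cases hJI' : J = -I
  · subst hJI'
    have : sliceEmb (-I) ⁻¹' (sliceEmb I '' A) = (starRingEnd ℂ) ⁻¹' A := by
      ext w
      simp only [Set.mem_preimage, sliceEmb_neg]
      constructor
      · rintro ⟨z, hz, hzw⟩
        rw [← sliceEmb_injective I hI hzw]
        exact hz
      · intro hw
        exact ⟨_, hw, rfl⟩
    rw [this]
    exact hA.preimage Complex.continuous_conj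
  · have : sliceEmb J ⁻¹' (sliceEmb I '' A) = ∅ := by
      ext w
      simp only [Set.mem_preimage, Set.mem_empty_iff_false, iff_false]
      rintro ⟨z, hz, hzw⟩
      have hzim : z.im ≠ 0 := him z hz
      rcases sliceEmb_eq_cases hJ hI hzw.symm hzim with ⟨hIJ, -⟩ | ⟨hIJ, -⟩
      · exact hJI hIJ
      · exact hJI' hIJ
    rw [this]
    exact isOpen_empty

theorem JoinedIn.map' {X Y : Type*} [TopologicalSpace X] [TopologicalSpace Y] {F : Set X}
    {x y : X} (h : JoinedIn F x y) {f : X → Y} (hf : Continuous f) :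
    JoinedIn (f '' F) (f x) (f y) :=
  ⟨h.somePath.map hf, fun t => ⟨_, h.somePath_mem t, rfl⟩⟩

def qi : Hq := ⟨0, 1, 0, 0⟩

theorem qi_mem : qi ∈ SphereS := by
  show qi ^ 2 = -1
  rw [sq]
  ext <;> simp [Quaternion.re_mul, Quaternion.imI_mul, Quaternion.imJ_mul, Quaternion.imK_mul,
    Quaternion.re_one, Quaternion.imI_one, Quaternion.imJ_one, Quaternion.imK_one] <;> simp [qi]

theorem exists_slice (x : Hq) : ∃ I ∈ SphereS, ∃ z : ℂ, sliceEmb I z = x := by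
  by_cases hx : x.im = 0
  · refine ⟨qi, qi_mem, (x.re : ℂ), ?_⟩
    rw [sliceEmb_ofReal]
    conv_rhs => rw [← Quaternion.re_add_im x, hx]
    simp
  · have hns : 0 < Quaternion.normSq x.im := by
      rcases (Quaternion.normSq_ne_zero.mpr hx).lt_or_gt with h | h
      · exact absurd h (not_lt.mpr Quaternion.normSq_nonneg)
      · exact h
    set n : ℝ := Real.sqrt (Quaternion.normSq x.im) with hn
    have hnpos : 0 < n := Real.sqrt_pos.mpr hns
    have hnn : n * n = Quaternion.normSq x.im := Real.mul_self_sqrt (le_of_lt hns)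
    refine ⟨n⁻¹ • x.im, ?_, ⟨x.re, n⟩, ?_⟩
    · show (n⁻¹ • x.im) ^ 2 = -1
      rw [sq, smul_mul_smul_comm,
        show Quaternion.im x * Quaternion.im x
            = -((Quaternion.normSq (Quaternion.im x) : ℝ) : Hq) by
          rw [← sq]; exact Quaternion.im_sq x]
      rw [smul_neg, Quaternion.smul_coe,
        show n⁻¹ * n⁻¹ * Quaternion.normSq (Quaternion.im x) = 1 by
          rw [← hnn]; field_simp]
      simp
    · rw [sliceEmb_smul]
      show (x.re : Hq) + n • (n⁻¹ • x.im) = x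
      rw [smul_smul, mul_inv_cancel₀ (ne_of_gt hnpos), one_smul, Quaternion.re_add_im]

theorem package (U : Set Hq) (p q : Hq)
    {I₁ : Hq} (hI₁ : I₁ ∈ SphereS) {I₂ : Hq} (hI₂ : I₂ ∈ SphereS)
    {zp zq m₁ m₂ : ℂ}
    (h1 : sliceEmb I₁ zp = p) (h2 : sliceEmb I₂ zq = q)
    (hm : sliceEmb I₁ m₁ = sliceEmb I₂ m₂)
    (j1 : JoinedIn (sliceEmb I₁ ⁻¹' U) zp m₁)
    (j2 : JoinedIn (sliceEmb I₂ ⁻¹' U) m₂ zq) :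
    ∃ I₁ ∈ SphereS, ∃ I₂ ∈ SphereS, ∃ γ₁ γ₂ : ℝ → Hq,
      @ContinuousOn ℝ Hq _ sliceTopology γ₁ (Set.Icc 0 1) ∧
      @ContinuousOn ℝ Hq _ sliceTopology γ₂ (Set.Icc 0 1) ∧
      γ₁ 0 = p ∧ γ₁ 1 = γ₂ 0 ∧ γ₂ 1 = q ∧
      (∀ t ∈ Set.Icc (0 : ℝ) 1, γ₁ t ∈ U ∩ sliceC I₁) ∧
      (∀ t ∈ Set.Icc (0 : ℝ) 1, γ₂ t ∈ U ∩ sliceC I₂) := by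
  refine ⟨I₁, hI₁, I₂, hI₂,
    (fun t => sliceEmb I₁ (j1.somePath.extend t)),
    (fun t => sliceEmb I₂ (j2.somePath.extend t)), ?_, ?_, ?_, ?_, ?_, ?_, ?_⟩
  · exact @Continuous.continuousOn ℝ Hq _ sliceTopology _ _
      (@Continuous.comp ℝ ℂ Hq _ _ sliceTopology _ _
        (continuous_sliceEmb I₁ hI₁) j1.somePath.continuous_extend)
  · exact @Continuous.continuousOn ℝ Hq _ sliceTopology _ _
      (@Continuous.comp ℝ ℂ Hq _ _ sliceTopology _ _
        (continuous_sliceEmb I₂ hI₂) j2.somePath.continuous_extend)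
  · show sliceEmb I₁ (j1.somePath.extend 0) = p
    rw [Path.extend_zero]; simpa using h1
  · show sliceEmb I₁ (j1.somePath.extend 1) = sliceEmb I₂ (j2.somePath.extend 0)
    rw [Path.extend_one, Path.extend_zero]; simpa using hm
  · show sliceEmb I₂ (j2.somePath.extend 1) = q
    rw [Path.extend_one]; simpa using h2
  · intro t ht
    show sliceEmb I₁ (j1.somePath.extend t) ∈ U ∩ sliceC I₁
    rw [Path.extend_apply j1.somePath ht]
    exact ⟨j1.somePath_mem _, Set.mem_range_self _⟩
  · intro t ht
    show sliceEmb I₂ (j2.somePath.extend t) ∈ U ∩ sliceC I₂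
    rw [Path.extend_apply j2.somePath ht]
    exact ⟨j2.somePath_mem _, Set.mem_range_self _⟩

theorem caseA (U : Set Hq)
    (hopen : @IsOpen Hq sliceTopology U)
    (hconn : @IsPreconnected Hq sliceTopology U)
    (hR : ¬ ∃ x : ℝ, (x : Hq) ∈ U)
    (p q : Hq) (hp : p ∈ U) (hq : q ∈ U) :
    ∃ I₁ ∈ SphereS, ∃ I₂ ∈ SphereS, ∃ γ₁ γ₂ : ℝ → Hq,
      @ContinuousOn ℝ Hq _ sliceTopology γ₁ (Set.Icc 0 1) ∧
      @ContinuousOn ℝ Hq _ sliceTopology γ₂ (Set.Icc 0 1) ∧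
      γ₁ 0 = p ∧ γ₁ 1 = γ₂ 0 ∧ γ₂ 1 = q ∧
      (∀ t ∈ Set.Icc (0 : ℝ) 1, γ₁ t ∈ U ∩ sliceC I₁) ∧
      (∀ t ∈ Set.Icc (0 : ℝ) 1, γ₂ t ∈ U ∩ sliceC I₂) := by
  have him_all : ∀ J ∈ SphereS, ∀ z : ℂ, sliceEmb J z ∈ U → z.im ≠ 0 := by
    intro J hJ z hz h0
    exact hR ⟨z.re, by rw [← sliceEmb_real J z h0]; exact hz⟩
  obtain ⟨I, hI, zp, hzp⟩ := exists_slice p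
  have hUI : IsOpen (sliceEmb I ⁻¹' U) := isOpen_slice_iff.mp hopen I hI
  -- U ⊆ sliceC I
  have hsub : U ⊆ sliceC I := by
    have hA1 : @IsOpen Hq sliceTopology (U ∩ sliceC I) := by
      have heq : U ∩ sliceC I = sliceEmb I '' {z | z ∈ sliceEmb I ⁻¹' U ∧ z.im ≠ 0} := by
        ext x
        constructor
        · rintro ⟨hxU, z, rfl⟩
          exact ⟨z, ⟨hxU, him_all I hI z hxU⟩, rfl⟩
        · rintro ⟨z, ⟨hzU, -⟩, rfl⟩
          exact ⟨hzU, z, rfl⟩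
      rw [heq]
      exact isOpen_slice_image I hI _
        (hUI.inter ((isOpen_compl_singleton).preimage Complex.continuous_im))
        (fun z hz => hz.2)
    have hA2 : @IsOpen Hq sliceTopology (U \ sliceC I) := by
      rw [isOpen_slice_iff]
      intro J hJ
      by_cases hJI : J = I
      · subst hJI
        have : sliceEmb J ⁻¹' (U \ sliceC J) = ∅ := by
          ext w
          simp only [Set.mem_preimage, Set.mem_diff, Set.mem_empty_iff_false, iff_false,
            not_and, not_not]
          exact fun _ => Set.mem_range_self w
        rw [this]; exact isOpen_empty
      by_cases hJI' : J = -I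
      · subst hJI'
        have : sliceEmb (-I) ⁻¹' (U \ sliceC I) = ∅ := by
          ext w
          simp only [Set.mem_preimage, Set.mem_diff, Set.mem_empty_iff_false, iff_false,
            not_and, not_not]
          intro _
          rw [← sliceC_neg I]
          exact Set.mem_range_self w
        rw [this]; exact isOpen_empty
      · have : sliceEmb J ⁻¹' (U \ sliceC I) = sliceEmb J ⁻¹' U := by
          ext w
          simp only [Set.mem_preimage, Set.mem_diff]
          refine ⟨fun h => h.1, fun h => ⟨h, ?_⟩⟩
          rintro ⟨z, hz⟩
          rcases sliceEmb_eq_cases hI hJ hz (him_all J hJ w h) with ⟨hIJ, -⟩ | ⟨hIJ, -⟩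
          · exact hJI hIJ.symm
          · exact hJI' (by rw [hIJ, neg_neg])
        rw [this]
        exact isOpen_slice_iff.mp hopen J hJ
    intro x hx
    by_contra hxn
    rcases hconn (U ∩ sliceC I) (U \ sliceC I) hA1 hA2
      (fun y hy => by
        by_cases h : y ∈ sliceC I
        · exact Or.inl ⟨hy, h⟩
        · exact Or.inr ⟨hy, h⟩)
      ⟨p, hp, hp, hzp ▸ Set.mem_range_self zp⟩
      ⟨x, hx, hx, hxn⟩ with ⟨y, -, ⟨-, hy1⟩, ⟨-, hy2⟩⟩
    exact hy2 hy1
  obtain ⟨zq, hzq⟩ : q ∈ sliceC I := hsub hq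
  have hpmem : zp ∈ sliceEmb I ⁻¹' U := by rw [Set.mem_preimage, hzp]; exact hp
  have hqmem : zq ∈ sliceEmb I ⁻¹' U := by rw [Set.mem_preimage, hzq]; exact hq
  -- U_I is preconnected
  have hpre : IsPreconnected (sliceEmb I ⁻¹' U) := by
    intro u v hu hv hcov hne_u hne_v
    obtain ⟨a, hau⟩ := hne_u
    obtain ⟨b, hbv⟩ := hne_v
    have haim : ∀ z ∈ u ∩ sliceEmb I ⁻¹' U, z.im ≠ 0 :=
      fun z hz => him_all I hI z hz.2
    have hbim : ∀ z ∈ v ∩ sliceEmb I ⁻¹' U, z.im ≠ 0 :=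
      fun z hz => him_all I hI z hz.2
    have hu' := isOpen_slice_image I hI _ (hu.inter hUI) haim
    have hv' := isOpen_slice_image I hI _ (hv.inter hUI) hbim
    rcases hconn _ _ hu' hv'
      (fun x hx => by
        obtain ⟨z, rfl⟩ := hsub hx
        rcases hcov (Set.mem_preimage.mpr hx) with h | h
        · exact Or.inl ⟨z, ⟨h, hx⟩, rfl⟩
        · exact Or.inr ⟨z, ⟨h, hx⟩, rfl⟩)
      ⟨sliceEmb I a, hau.1, a, ⟨hau.2, hau.1⟩, rfl⟩
      ⟨sliceEmb I b, hbv.1, b, ⟨hbv.2, hbv.1⟩, rfl⟩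
      with ⟨y, -, ⟨a', ha', ha'e⟩, ⟨b', hb', hb'e⟩⟩
    have hab : a' = b' := sliceEmb_injective I hI (by rw [ha'e, hb'e])
    exact ⟨a', ha'.2, ha'.1, hab ▸ hb'.1⟩
  have hconn' : IsConnected (sliceEmb I ⁻¹' U) := ⟨⟨zp, hpmem⟩, hpre⟩
  have hjoin : JoinedIn (sliceEmb I ⁻¹' U) zp zq :=
    (hUI.isConnected_iff_isPathConnected.mp hconn').joinedIn zp hpmem zq hqmem
  exact package U p q hI hI hzp hzq rfl hjoin (JoinedIn.refl hqmem)

theorem caseB (U : Set Hq)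
    (hopen : @IsOpen Hq sliceTopology U)
    (hconn : @IsPreconnected Hq sliceTopology U)
    (hreal : IsPreconnected ((fun x : ℝ => (x : Hq)) ⁻¹' U))
    (hR : ∃ x : ℝ, (x : Hq) ∈ U)
    (p q : Hq) (hp : p ∈ U) (hq : q ∈ U) :
    ∃ I₁ ∈ SphereS, ∃ I₂ ∈ SphereS, ∃ γ₁ γ₂ : ℝ → Hq,
      @ContinuousOn ℝ Hq _ sliceTopology γ₁ (Set.Icc 0 1) ∧
      @ContinuousOn ℝ Hq _ sliceTopology γ₂ (Set.Icc 0 1) ∧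
      γ₁ 0 = p ∧ γ₁ 1 = γ₂ 0 ∧ γ₂ 1 = q ∧
      (∀ t ∈ Set.Icc (0 : ℝ) 1, γ₁ t ∈ U ∩ sliceC I₁) ∧
      (∀ t ∈ Set.Icc (0 : ℝ) 1, γ₂ t ∈ U ∩ sliceC I₂) := by
  classical
  set P : Hq → Prop := fun x => ∃ I ∈ SphereS, ∃ z w : ℂ,
    sliceEmb I z = x ∧ w.im = 0 ∧ JoinedIn (sliceEmb I ⁻¹' U) z w with hP
  -- key: transfer P to any parametrization
  have key : ∀ J ∈ SphereS, ∀ z₀ : ℂ, sliceEmb J z₀ ∈ U → P (sliceEmb J z₀) →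
      ∃ w : ℂ, w.im = 0 ∧ JoinedIn (sliceEmb J ⁻¹' U) z₀ w := by
    intro J hJ z₀ hz₀U hPz
    by_cases h0 : z₀.im = 0
    · exact ⟨z₀, h0, JoinedIn.refl hz₀U⟩
    obtain ⟨I, hI, z, w, hzx, hw, hjoin⟩ := hPz
    rcases sliceEmb_eq_cases hI hJ hzx h0 with ⟨hIJ, hzz⟩ | ⟨hIJ, hzz⟩
    · subst hIJ; subst hzz
      exact ⟨w, hw, hjoin⟩
    · have hemb : ∀ ζ : ℂ, sliceEmb I ζ = sliceEmb J ((starRingEnd ℂ) ζ) := by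
        intro ζ; rw [hIJ]; exact sliceEmb_neg J ζ
      have hpre : sliceEmb I ⁻¹' U = (starRingEnd ℂ) ⁻¹' (sliceEmb J ⁻¹' U) := by
        ext ζ; simp [hemb ζ]
      have hj2 : JoinedIn (sliceEmb J ⁻¹' U) ((starRingEnd ℂ) z) ((starRingEnd ℂ) w) := by
        have := (hjoin.map' (f := (starRingEnd ℂ)) Complex.continuous_conj)
        refine this.mono ?_
        rw [hpre]
        exact Set.image_preimage_subset _ _
      have hzc : (starRingEnd ℂ) z = z₀ := by rw [hzz, Complex.conj_conj]
      have hwc : (starRingEnd ℂ) w = w := Complex.conj_eq_iff_im.mpr hw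
      rw [hzc, hwc] at hj2
      exact ⟨w, hw, hj2⟩
  have hWopen : @IsOpen Hq sliceTopology {x | x ∈ U ∧ P x} := by
    rw [isOpen_slice_iff]
    intro J hJ
    rw [Metric.isOpen_iff]
    intro z₀ hz₀
    obtain ⟨ε, hε, hball⟩ := Metric.isOpen_iff.mp (isOpen_slice_iff.mp hopen J hJ) z₀ hz₀.1
    obtain ⟨w, hw, hj⟩ := key J hJ z₀ hz₀.1 hz₀.2
    refine ⟨ε, hε, fun z₁ hz₁ => ?_⟩
    have hjoin01 : JoinedIn (sliceEmb J ⁻¹' U) z₁ z₀ :=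
      (((convex_ball z₀ ε).isPathConnected ⟨z₀, Metric.mem_ball_self hε⟩).joinedIn
        z₁ hz₁ z₀ (Metric.mem_ball_self hε)).mono hball
    exact ⟨hball hz₁, J, hJ, z₁, w, rfl, hw, hjoin01.trans hj⟩
  have hWcopen : @IsOpen Hq sliceTopology {x | x ∈ U ∧ ¬ P x} := by
    rw [isOpen_slice_iff]
    intro J hJ
    rw [Metric.isOpen_iff]
    intro z₀ hz₀
    obtain ⟨ε, hε, hball⟩ := Metric.isOpen_iff.mp (isOpen_slice_iff.mp hopen J hJ) z₀ hz₀.1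
    refine ⟨ε, hε, fun z₁ hz₁ => ⟨hball hz₁, fun hPz₁ => hz₀.2 ?_⟩⟩
    obtain ⟨w, hw, hj⟩ := key J hJ z₁ (hball hz₁) hPz₁
    have hjoin01 : JoinedIn (sliceEmb J ⁻¹' U) z₀ z₁ :=
      (((convex_ball z₀ ε).isPathConnected ⟨z₀, Metric.mem_ball_self hε⟩).joinedIn
        z₀ (Metric.mem_ball_self hε) z₁ hz₁).mono hball
    exact ⟨J, hJ, z₀, w, rfl, hw, hjoin01.trans hj⟩
  -- all points of U satisfy P
  have hall : ∀ x ∈ U, P x := by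
    intro x hx
    by_contra hnx
    obtain ⟨r, hr⟩ := hR
    have hrP : P ((r : ℝ) : Hq) :=
      ⟨qi, qi_mem, (r : ℂ), (r : ℂ), sliceEmb_ofReal qi r, Complex.ofReal_im r,
        JoinedIn.refl (by rw [Set.mem_preimage, sliceEmb_ofReal]; exact hr)⟩
    rcases hconn _ _ hWopen hWcopen
      (fun y hy => by
        by_cases h : P y
        · exact Or.inl ⟨hy, h⟩
        · exact Or.inr ⟨hy, h⟩)
      ⟨(r : Hq), hr, hr, hrP⟩
      ⟨x, hx, hx, hnx⟩ with ⟨y, -, ⟨-, hy1⟩, ⟨-, hy2⟩⟩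
    exact hy2 hy1
  obtain ⟨I₁, hI₁, zp, wp, hep, hwp, j1⟩ := hall p hp
  obtain ⟨I₂, hI₂, zq, wq, heq, hwq, j2⟩ := hall q hq
  -- the real interval between wp.re and wq.re
  have hVopen : IsOpen ((fun x : ℝ => (x : Hq)) ⁻¹' U) := by
    have : (fun x : ℝ => (x : Hq)) ⁻¹' U = Complex.ofReal ⁻¹' (sliceEmb qi ⁻¹' U) := by
      ext x
      simp [sliceEmb_ofReal]
    rw [this]
    exact (isOpen_slice_iff.mp hopen qi qi_mem).preimage Complex.continuous_ofReal
  have hord : Set.OrdConnected ((fun x : ℝ => (x : Hq)) ⁻¹' U) := hreal.ordConnected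
  have hwp' : sliceEmb I₁ wp = ((wp.re : ℝ) : Hq) := sliceEmb_real I₁ wp hwp
  have hwq' : sliceEmb I₂ wq = ((wq.re : ℝ) : Hq) := sliceEmb_real I₂ wq hwq
  have hwpV : wp.re ∈ (fun x : ℝ => (x : Hq)) ⁻¹' U := by
    rw [Set.mem_preimage, ← hwp']
    exact j1.target_mem
  have hwqV : wq.re ∈ (fun x : ℝ => (x : Hq)) ⁻¹' U := by
    rw [Set.mem_preimage, ← hwq']
    exact j2.target_mem
  have hIccV : Set.uIcc wp.re wq.re ⊆ (fun x : ℝ => (x : Hq)) ⁻¹' U :=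
    hord.uIcc_subset hwpV hwqV
  have hSsub : Complex.ofReal '' (Set.uIcc wp.re wq.re) ⊆ sliceEmb I₁ ⁻¹' U := by
    rintro _ ⟨x, hx, rfl⟩
    rw [Set.mem_preimage, sliceEmb_ofReal]
    exact hIccV hx
  have hSpc : IsPathConnected (Complex.ofReal '' (Set.uIcc wp.re wq.re)) :=
    ((convex_uIcc wp.re wq.re).isPathConnected ⟨wp.re, Set.left_mem_uIcc⟩).image
      Complex.continuous_ofReal
  have hwp'' : (wp.re : ℂ) = wp := Complex.ext rfl hwp.symm
  have jseg : JoinedIn (sliceEmb I₁ ⁻¹' U) wp ((wq.re : ℝ) : ℂ) := by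
    have h := (hSpc.joinedIn ((wp.re : ℝ) : ℂ) ⟨wp.re, Set.left_mem_uIcc, rfl⟩
      ((wq.re : ℝ) : ℂ) ⟨wq.re, Set.right_mem_uIcc, rfl⟩).mono hSsub
    rwa [hwp''] at h
  have hm : sliceEmb I₁ ((wq.re : ℝ) : ℂ) = sliceEmb I₂ wq := by
    rw [sliceEmb_ofReal, hwq']
  exact package U p q hI₁ hI₂ hep heq hm (j1.trans jseg) j2.symm

/-- In a real-connected slice-domain, any two points can be joined by the concatenation
of two slice preserving paths. -/
theorem joined_by_two_slicePreserving_paths (U : Set Hq)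
    (hopen : @IsOpen Hq sliceTopology U)
    (hconn : @IsPreconnected Hq sliceTopology U)
    (hne : U.Nonempty)
    (hreal : IsPreconnected ((fun x : ℝ => (x : Hq)) ⁻¹' U))
    (p q : Hq) (hp : p ∈ U) (hq : q ∈ U) :
    ∃ I₁ ∈ SphereS, ∃ I₂ ∈ SphereS, ∃ γ₁ γ₂ : ℝ → Hq,
      @ContinuousOn ℝ Hq _ sliceTopology γ₁ (Set.Icc 0 1) ∧
      @ContinuousOn ℝ Hq _ sliceTopology γ₂ (Set.Icc 0 1) ∧
      γ₁ 0 = p ∧ γ₁ 1 = γ₂ 0 ∧ γ₂ 1 = q ∧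
      (∀ t ∈ Set.Icc (0 : ℝ) 1, γ₁ t ∈ U ∩ sliceC I₁) ∧
      (∀ t ∈ Set.Icc (0 : ℝ) 1, γ₂ t ∈ U ∩ sliceC I₂) := by
  by_cases hR : ∃ x : ℝ, (x : Hq) ∈ U
  · exact caseB U hopen hconn hreal hR p q hp hq
  · exact caseA U hopen hconn hR p q hp hq
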